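/- Let γ = (√5−1)/2. The function G : ℕ → ℕ defined by G(n) = ⌊(n+1)γ⌋ satisfies G(1) = 1 and the Hofstadter recursion G(n) = n − G(G(n−1)) for all n ≥ 2 (and also G(0) = 0). -/

import Mathlib

lemma hofstadter_key (γ : ℝ) (hγ2 : γ^2 = 1 - γ) (h0 : 0 < γ) (h1 : γ < 1)
    (hirr : Irrational γ) (m : ℕ) :
    ⌊((⌊((m:ℝ)+1)*γ⌋₊ : ℝ) + 1) * γ⌋₊ + ⌊((m:ℝ)+2)*γ⌋₊ = m + 1 := by
  set a := ⌊((m:ℝ)+1)*γ⌋₊ with ha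
  have hx0 : (0:ℝ) ≤ ((m:ℝ)+1)*γ := by positivity
  have hle : (a:ℝ) ≤ ((m:ℝ)+1)*γ := Nat.floor_le hx0
  have hlt : ((m:ℝ)+1)*γ < a+1 := Nat.lt_floor_add_one _
  have ham : a ≤ m := by
    have h : (a:ℝ) < (m:ℝ)+1 := lt_of_le_of_lt hle (by nlinarith)
    have := (by exact_mod_cast h : a < m+1)
    omega
  have hne : ((m:ℝ)+2)*γ ≠ (a:ℝ)+1 := by
    intro h
    have hγeq : γ = ((a:ℝ)+1)/((m:ℝ)+2) := by
      field_simp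
      linarith
    exact hirr ⟨((a:ℚ)+1)/((m:ℚ)+2), by push_cast; rw [hγeq]⟩
  rcases lt_or_gt_of_ne hne with hc | hc
  · have hb : ⌊((m:ℝ)+2)*γ⌋₊ = a := by
      rw [Nat.floor_eq_iff (by positivity)]
      constructor
      · nlinarith
      · linarith
    have hfa : ⌊((a:ℝ)+1)*γ⌋₊ = m + 1 - a := by
      rw [Nat.floor_eq_iff (by positivity)]
      have hcast : ((m+1-a:ℕ):ℝ) = (m:ℝ)+1-(a:ℝ) := by
        rw [Nat.cast_sub (by omega)]; push_cast; ring
      rw [hcast]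
      constructor <;> nlinarith
    omega
  · have hb : ⌊((m:ℝ)+2)*γ⌋₊ = a + 1 := by
      rw [Nat.floor_eq_iff (by positivity)]
      constructor
      · push_cast; linarith
      · push_cast; nlinarith
    have hfa : ⌊((a:ℝ)+1)*γ⌋₊ = m - a := by
      rw [Nat.floor_eq_iff (by positivity)]
      have hcast : ((m-a:ℕ):ℝ) = (m:ℝ)-(a:ℝ) := by
        rw [Nat.cast_sub ham]
      rw [hcast]
      constructor <;> nlinarith
    omega

/-- Hofstadter's G-sequence: the slow Beatty sequence `G(n) = ⌊(n+1)γ⌋` with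
`γ = (√5 − 1)/2` satisfies `G(0) = 0`, `G(1) = 1`, and the Hofstadter recursion
`G(n) = n − G(G(n−1))` for all `n ≥ 2`. -/
theorem hofstadter_G_eq_slow_beatty
    (γ : ℝ) (hγ : γ = (Real.sqrt 5 - 1) / 2)
    (G : ℕ → ℕ) (hG : ∀ n : ℕ, G n = ⌊((n : ℝ) + 1) * γ⌋₊) :
    G 0 = 0 ∧ G 1 = 1 ∧ ∀ n : ℕ, 2 ≤ n → G n = n - G (G (n - 1)) := by
  have hs5 : Real.sqrt 5 ^ 2 = 5 := Real.sq_sqrt (by norm_num)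
  have hs5lt : Real.sqrt 5 < 3 := by nlinarith [Real.sqrt_nonneg 5]
  have hs5gt : 2 < Real.sqrt 5 := by nlinarith [Real.sqrt_nonneg 5]
  have hγ2 : γ^2 = 1 - γ := by rw [hγ]; nlinarith
  have h0 : 0 < γ := by rw [hγ]; linarith
  have h1 : γ < 1 := by rw [hγ]; linarith
  have hhalf : 1/2 < γ := by rw [hγ]; linarith
  have hirr : Irrational γ := by
    rw [hγ]
    have h5 : Irrational (Real.sqrt 5) := (by norm_num : Nat.Prime 5).irrational_sqrt
    have := (h5.sub_intCast 1).div_intCast (m := 2) (by norm_num)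
    simpa using this
  refine ⟨?_, ?_, ?_⟩
  · rw [hG 0]
    apply Nat.floor_eq_zero.mpr
    push_cast; linarith
  · rw [hG 1]
    rw [Nat.floor_eq_iff (by positivity)]
    push_cast
    constructor <;> linarith
  · intro n hn
    obtain ⟨m, rfl⟩ : ∃ m, n = m + 2 := ⟨n - 2, by omega⟩
    have key := hofstadter_key γ hγ2 h0 h1 hirr (m + 1)
    have e1 : G (m + 2 - 1) = ⌊((m:ℝ)+2)*γ⌋₊ := by
      rw [show m + 2 - 1 = m + 1 from rfl, hG (m+1)]; push_cast; ring_nf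
    have e2 : G (m + 2) = ⌊((m:ℝ)+3)*γ⌋₊ := by
      rw [hG (m+2)]; push_cast; ring_nf
    have e3 : G (G (m + 2 - 1)) = ⌊((⌊((m:ℝ)+2)*γ⌋₊ : ℝ) + 1) * γ⌋₊ := by
      rw [e1, hG]
    rw [e2, e3]
    have key' : ⌊((⌊((m:ℝ)+2)*γ⌋₊ : ℝ) + 1) * γ⌋₊ + ⌊((m:ℝ)+3)*γ⌋₊ = m + 2 := by
      convert key using 4 <;> push_cast <;> ring
    omega
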